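/- Let f̂(x) = Σ_{k=0}^∞ ĉ_k x^{2k} be absolutely convergent for all real x, let β ≠ 0 and x ≥ 0. Then ∫_0^x φ(βt) f̂(t) dt = (1/2) Σ_{k=0}^∞ ((2k-1)!! ĉ_k / |β|^{2k+1}) · P(k + 1/2, β²x²/2). -/

import Mathlib

open Real MeasureTheory

/-- Standard normal density. -/
noncomputable def stdPdf (t : ℝ) : ℝ := Real.exp (-t ^ 2 / 2) / Real.sqrt (2 * Real.pi)

/-- Lower regularized incomplete gamma function P(a,x) = γ(a,x)/Γ(a). -/
noncomputable def regGammaP (a x : ℝ) : ℝ :=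
  (∫ t in (0:ℝ)..x, t ^ (a - 1) * Real.exp (-t)) / Real.Gamma a

/-- (2k-1)!! = (2k)!/(2^k k!), with (-1)!! = 1. -/
noncomputable def oddDF' (k : ℕ) : ℝ := (2 * k).factorial / (2 ^ k * k.factorial)

open Set Topology


lemma oddDF'_pos (k : ℕ) : 0 < oddDF' k := by
  unfold oddDF'
  positivity

lemma oddDF'_succ (k : ℕ) : oddDF' (k + 1) = (2 * k + 1) * oddDF' k := by
  unfold oddDF'
  have h1 : (2 * (k + 1)) = (2 * k) + 1 + 1 := by ring
  rw [h1, Nat.factorial_succ, Nat.factorial_succ, Nat.factorial_succ]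
  push_cast
  have hk : (k.factorial : ℝ) ≠ 0 := Nat.cast_ne_zero.mpr k.factorial_ne_zero
  field_simp
  ring

lemma Gamma_half (k : ℕ) : Real.Gamma ((k : ℝ) + 1 / 2) = Real.sqrt π * oddDF' k / 2 ^ k := by
  induction k with
  | zero =>
    simp only [Nat.cast_zero, zero_add]
    rw [Real.Gamma_one_half_eq]
    simp [oddDF']
  | succ k ih =>
    have h : ((k : ℝ) + 1) + 1 / 2 = ((k : ℝ) + 1 / 2) + 1 := by ring
    push_cast
    rw [h, Real.Gamma_add_one (by positivity), ih, oddDF'_succ]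
    ring

lemma gammaIntegrand_intervalIntegrable {a : ℝ} (ha : 0 < a) {b : ℝ} (hb : 0 ≤ b) :
    IntervalIntegrable (fun s : ℝ => s ^ (a - 1) * Real.exp (-s)) volume 0 b := by
  rw [intervalIntegrable_iff_integrableOn_Ioc_of_le hb]
  exact (((Real.GammaIntegral_convergent ha).mono_set Ioc_subset_Ioi_self).congr_fun
    (fun s _ => mul_comm _ _) measurableSet_Ioc)

lemma key (β x : ℝ) (hβ : β ≠ 0) (hx : 0 ≤ x) (k : ℕ) :
    ∫ t in (0:ℝ)..x, stdPdf (β * t) * t ^ (2 * k) =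
      (1 / 2) * (oddDF' k / |β| ^ (2 * k + 1)) * regGammaP ((k : ℝ) + 1 / 2) (β ^ 2 * x ^ 2 / 2) := by
  set a : ℝ := (k : ℝ) + 1 / 2 with ha_def
  have ha : 0 < a := by positivity
  set f : ℝ → ℝ := fun s => s ^ (a - 1) * Real.exp (-s) with hf_def
  set C : ℝ := (1 / 2) * (oddDF' k / |β| ^ (2 * k + 1)) / Real.Gamma a with hC_def
  set G : ℝ → ℝ := fun t => C * ∫ s in (0:ℝ)..(β ^ 2 * t ^ 2 / 2), f s with hG_def
  have hβ2 : (0:ℝ) < β ^ 2 := by positivity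
  -- RHS equals G x
  have hRHS : (1 / 2) * (oddDF' k / |β| ^ (2 * k + 1)) * regGammaP a (β ^ 2 * x ^ 2 / 2) = G x := by
    simp only [hG_def, hC_def, regGammaP]
    ring
  rw [hRHS]
  have hG0 : G 0 = 0 := by simp [hG_def]
  rw [show G x = G x - G 0 by rw [hG0]; ring]
  -- continuity of G on [0, x]
  have hZ : (0:ℝ) ≤ β ^ 2 * x ^ 2 / 2 := by positivity
  have hHcont : ContinuousOn (fun u => ∫ s in (0:ℝ)..u, f s) (Icc 0 (β ^ 2 * x ^ 2 / 2)) := by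
    have := intervalIntegral.continuousOn_primitive_interval'
      (gammaIntegrand_intervalIntegrable ha hZ) (left_mem_uIcc (a := (0:ℝ)))
    rwa [uIcc_of_le hZ] at this
  have hzcont : ContinuousOn (fun t : ℝ => β ^ 2 * t ^ 2 / 2) (Icc 0 x) := by fun_prop
  have hmaps : MapsTo (fun t : ℝ => β ^ 2 * t ^ 2 / 2) (Icc 0 x) (Icc 0 (β ^ 2 * x ^ 2 / 2)) := by
    intro t ht
    constructor
    · positivity
    · have h1 : t ^ 2 ≤ x ^ 2 := by nlinarith [ht.1, ht.2]
      nlinarith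
  have hGcont : ContinuousOn G (Icc 0 x) :=
    continuousOn_const.mul (hHcont.comp hzcont hmaps)
  -- derivative on (0, x)
  have hderiv : ∀ t ∈ Ioo 0 x, HasDerivWithinAt G (stdPdf (β * t) * t ^ (2 * k)) (Ioi t) t := by
    intro t ht
    have ht0 : 0 < t := ht.1
    set z : ℝ := β ^ 2 * t ^ 2 / 2 with hz_def
    have hz : 0 < z := by positivity
    have hmeas : StronglyMeasurableAtFilter f (𝓝 z) volume := by
      refine ⟨Ioi 0, Ioi_mem_nhds hz, ?_⟩
      refine ContinuousOn.aestronglyMeasurable ?_ measurableSet_Ioi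
      intro s hs
      exact ((Real.continuousAt_rpow_const s (a - 1) (Or.inl (ne_of_gt hs))).mul
        ((Real.continuous_exp.comp continuous_neg).continuousAt)).continuousWithinAt
    have hcontf : ContinuousAt f z :=
      (Real.continuousAt_rpow_const z (a - 1) (Or.inl (ne_of_gt hz))).mul
        ((Real.continuous_exp.comp continuous_neg).continuousAt)
    have hH : HasDerivAt (fun u => ∫ s in (0:ℝ)..u, f s) (f z) z :=
      intervalIntegral.integral_hasDerivAt_right
        (gammaIntegrand_intervalIntegrable ha hz.le) hmeas hcontf
    have hzd : HasDerivAt (fun t : ℝ => β ^ 2 * t ^ 2 / 2) (β ^ 2 * t) t := by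
      have := ((hasDerivAt_pow 2 t).const_mul (β ^ 2)).div_const 2
      rw [show β ^ 2 * t = β ^ 2 * (((2:ℕ):ℝ) * t ^ (2 - 1)) / 2 by norm_num; ring]
      exact this
    have hGd : HasDerivAt G (C * (f z * (β ^ 2 * t))) t := by
        have h3 := hH.comp t hzd
        exact h3.const_mul C
    have heq : C * (f z * (β ^ 2 * t)) = stdPdf (β * t) * t ^ (2 * k) := by
      have habs : (0:ℝ) < |β| := abs_pos.mpr hβ
      have hz1 : z ^ (a - 1) = z ^ k * (Real.sqrt z)⁻¹ := by
        rw [show a - 1 = (k : ℝ) + (-(1 / 2)) by rw [ha_def]; ring,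
          Real.rpow_add hz, Real.rpow_natCast, Real.rpow_neg hz.le, ← Real.sqrt_eq_rpow]
      have hsz : Real.sqrt z = |β| * t / Real.sqrt 2 := by
        rw [show z = (|β| * t) ^ 2 / 2 by rw [hz_def, mul_pow, sq_abs]]
        rw [show ((|β| * t) ^ 2 / 2) = (|β| * t) ^ 2 * (2:ℝ)⁻¹ by ring]
        rw [Real.sqrt_mul (by positivity), Real.sqrt_sq (by positivity), Real.sqrt_inv]
        ring
      have hzk : z ^ k = |β| ^ (2 * k) * t ^ (2 * k) / 2 ^ k := by
        rw [hz_def, div_pow, mul_pow, ← pow_mul, ← pow_mul, pow_mul β 2 k, ← sq_abs β, ← pow_mul]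
      have hstd : stdPdf (β * t) = Real.exp (-z) / (Real.sqrt 2 * Real.sqrt π) := by
        rw [stdPdf, ← Real.sqrt_mul (by norm_num : (0:ℝ) ≤ 2) π]
        congr 2
        rw [hz_def, mul_pow]; ring
      rw [hC_def, hf_def]
      simp only []
      rw [Gamma_half, hz1, hsz, hzk, hstd]
      have hβ2a : β ^ 2 = |β| ^ 2 := (sq_abs β).symm
      rw [hβ2a]
      have h2 : Real.sqrt 2 ≠ 0 := by positivity
      have hπ : Real.sqrt π ≠ 0 := by positivity
      have hodf : oddDF' k ≠ 0 := (oddDF'_pos k).ne'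
      have h22 : Real.sqrt 2 * Real.sqrt 2 = 2 := Real.mul_self_sqrt (by norm_num)
      field_simp
      ring_nf
      rw [Real.sq_sqrt (by norm_num : (0:ℝ) ≤ 2)]
    rw [← heq]
    exact hGd.hasDerivWithinAt
  have hint : IntervalIntegrable (fun t => stdPdf (β * t) * t ^ (2 * k)) volume 0 x := by
    apply Continuous.intervalIntegrable
    unfold stdPdf
    fun_prop
  exact intervalIntegral.integral_eq_sub_of_hasDeriv_right_of_le hx hGcont hderiv hint

lemma stdPdf_nonneg (s : ℝ) : 0 ≤ stdPdf s := by
  unfold stdPdf; positivity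

lemma stdPdf_le_one (s : ℝ) : stdPdf s ≤ 1 := by
  unfold stdPdf
  rw [div_le_one (by positivity)]
  calc Real.exp (-s ^ 2 / 2) ≤ 1 := Real.exp_le_one_iff.mpr (by nlinarith [sq_nonneg s])
    _ ≤ Real.sqrt (2 * π) := by
        rw [show (1:ℝ) = Real.sqrt 1 by simp]
        exact Real.sqrt_le_sqrt (by nlinarith [Real.pi_gt_three])

lemma continuous_stdPdf : Continuous stdPdf := by
  unfold stdPdf; fun_prop

theorem integral_pdf_mul_even_series (c : ℕ → ℝ) (β x : ℝ) (hβ : β ≠ 0) (hx : 0 ≤ x)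
    (habs : ∀ y : ℝ, Summable fun k : ℕ => |c k * y ^ (2 * k)|) :
    ∫ t in (0:ℝ)..x, stdPdf (β * t) * ∑' k : ℕ, c k * t ^ (2 * k) =
      (1 / 2) * ∑' k : ℕ,
        (oddDF' k * c k / |β| ^ (2 * k + 1)) *
          regGammaP (k + 1 / 2) (β ^ 2 * x ^ 2 / 2) := by
  set F : ℕ → ℝ → ℝ := fun k t => stdPdf (β * t) * (c k * t ^ (2 * k)) with hF_def
  have hF_int : ∀ k : ℕ, Integrable (F k) (volume.restrict (Ioc 0 x)) := by
    intro k
    exact ((continuous_stdPdf.comp (continuous_const.mul continuous_id)).mul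
      (continuous_const.mul (continuous_pow _))).integrableOn_Ioc
  have hF_norm : ∀ k : ℕ, (∫ t in Ioc (0:ℝ) x, ‖F k t‖) ≤ |c k * x ^ (2 * k)| * x := by
    intro k
    have hb : ∀ t ∈ Ioc (0:ℝ) x, ‖F k t‖ ≤ |c k * x ^ (2 * k)| := by
      intro t ht
      have ht0 : 0 < t := ht.1
      have htx : t ≤ x := ht.2
      calc ‖F k t‖ = stdPdf (β * t) * (|c k| * t ^ (2 * k)) := by
            rw [hF_def]
            simp only [norm_eq_abs, abs_mul, abs_of_nonneg (stdPdf_nonneg _),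
              abs_of_nonneg (pow_nonneg ht0.le _)]
        _ ≤ 1 * (|c k| * x ^ (2 * k)) :=
            mul_le_mul (stdPdf_le_one _)
              (mul_le_mul_of_nonneg_left (pow_le_pow_left₀ ht0.le htx _) (abs_nonneg _))
              (by positivity) zero_le_one
        _ = |c k * x ^ (2 * k)| := by
            rw [abs_mul, abs_of_nonneg (pow_nonneg hx _)]; ring
    calc (∫ t in Ioc (0:ℝ) x, ‖F k t‖) ≤ ∫ _t in Ioc (0:ℝ) x, |c k * x ^ (2 * k)| := by
          apply setIntegral_mono_on (hF_int k).norm (integrableOn_const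
            (by simp [Real.volume_Ioc]))
            measurableSet_Ioc hb
      _ = |c k * x ^ (2 * k)| * x := by
          rw [setIntegral_const]
          simp [Real.volume_Ioc, ENNReal.toReal_ofReal hx, smul_eq_mul, mul_comm, max_eq_left hx, abs_of_nonneg hx]
  have hsum : Summable fun k : ℕ => ∫ t in Ioc (0:ℝ) x, ‖F k t‖ :=
    Summable.of_nonneg_of_le (fun k => integral_nonneg fun t => norm_nonneg _)
      hF_norm ((habs x).mul_right x)
  rw [intervalIntegral.integral_of_le hx]
  simp_rw [← tsum_mul_left]
  rw [← integral_tsum_of_summable_integral_norm hF_int hsum]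
  have h2 : ∀ k : ℕ, (∫ t in Ioc (0:ℝ) x, F k t) =
      (1 / 2) * ((oddDF' k * c k / |β| ^ (2 * k + 1)) *
        regGammaP ((k : ℝ) + 1 / 2) (β ^ 2 * x ^ 2 / 2)) := by
    intro k
    rw [← intervalIntegral.integral_of_le hx]
    have hFk : ∀ t : ℝ, F k t = c k * (stdPdf (β * t) * t ^ (2 * k)) := by
      intro t; rw [hF_def]; ring
    simp_rw [hFk]
    rw [intervalIntegral.integral_const_mul, key β x hβ hx k]
    ring
  rw [tsum_congr h2, tsum_mul_left]
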